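/- For any integer $n \geq 2$, $\sum_{k=1}^{n-1} \frac{1}{\sin(k\pi/n)} \geq \frac{2n}{\pi} \ln\left(\frac{\cos(\pi/(2n))}{\sin(\pi/(2n))}\right)$. -/

import Mathlib

open Real Finset

-- convexity of inv
lemma aux_inv_le {u v t s : ℝ} (hu : 0 < u) (hv : 0 < v) (ht : 0 ≤ t) (hs : 0 ≤ s)
    (hts : t + s = 1) : (t * u + s * v)⁻¹ ≤ t * u⁻¹ + s * v⁻¹ := by
  have h := (strictConvexOn_zpow (by norm_num : (-1:ℤ) ≠ 0) (by norm_num : (-1:ℤ) ≠ 1)).convexOn.2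
    (Set.mem_Ioi.2 hu) (Set.mem_Ioi.2 hv) ht hs hts
  simpa [zpow_neg, smul_eq_mul] using h

lemma aux_hasDerivAt (x : ℝ) (hx : x ∈ Set.Ioo 0 π) :
    HasDerivAt (fun y => Real.log (Real.tan (y / 2))) (Real.sin x)⁻¹ x := by
  have hx2 : x / 2 ∈ Set.Ioo 0 (π / 2) := ⟨by linarith [hx.1], by linarith [hx.2]⟩
  have hcos : Real.cos (x / 2) ≠ 0 := (Real.cos_pos_of_mem_Ioo ⟨by linarith [hx2.1, Real.pi_pos], hx2.2⟩).ne'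
  have hsin : 0 < Real.sin (x / 2) := Real.sin_pos_of_pos_of_lt_pi hx2.1 (by linarith [hx2.2, Real.pi_pos])
  have htan : 0 < Real.tan (x / 2) := Real.tan_pos_of_pos_of_lt_pi_div_two hx2.1 hx2.2
  have h1 : HasDerivAt (fun y : ℝ => y / 2) (1 / 2) x := by
    simpa using (hasDerivAt_id x).div_const 2
  have h2 : HasDerivAt Real.tan (1 / Real.cos (x / 2) ^ 2) (x / 2) := Real.hasDerivAt_tan hcos
  have h3 : HasDerivAt (fun y => Real.log (Real.tan (y / 2)))
      (1 / Real.cos (x / 2) ^ 2 * (1 / 2) / Real.tan (x / 2)) x := by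
    have h21 := h2.comp x h1
    exact h21.log htan.ne'
  convert h3 using 1
  simp only [Function.comp_apply, Real.tan_eq_sin_div_cos]
  have hsx : Real.sin x = 2 * Real.sin (x / 2) * Real.cos (x / 2) := by
    rw [← Real.sin_two_mul]; ring_nf
  rw [hsx]
  field_simp

lemma aux_sin_pos {x : ℝ} (hx : x ∈ Set.Ioo 0 π) : 0 < Real.sin x :=
  Real.sin_pos_of_pos_of_lt_pi hx.1 hx.2

lemma aux_trapezoid {a b : ℝ} (ha : 0 < a) (hab : a ≤ b) (hb : b < π) :
    Real.log (Real.tan (b / 2)) - Real.log (Real.tan (a / 2)) ≤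
      (b - a) * ((Real.sin a)⁻¹ + (Real.sin b)⁻¹) / 2 := by
  rcases eq_or_lt_of_le hab with rfl | hab
  · simp
  have hmem : ∀ x ∈ Set.Icc a b, x ∈ Set.Ioo 0 π := fun x hx => ⟨lt_of_lt_of_le ha hx.1, lt_of_le_of_lt hx.2 hb⟩
  have hcont : ContinuousOn (fun x => (Real.sin x)⁻¹) (Set.Icc a b) := by
    apply ContinuousOn.inv₀ (Real.continuous_sin.continuousOn)
    exact fun x hx => (aux_sin_pos (hmem x hx)).ne'
  have hint : IntervalIntegrable (fun x => (Real.sin x)⁻¹) MeasureTheory.volume a b := by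
    rw [intervalIntegrable_iff_integrableOn_Icc_of_le hab.le]
    exact hcont.integrableOn_compact isCompact_Icc
  have hftc : ∫ x in a..b, (Real.sin x)⁻¹ =
      Real.log (Real.tan (b / 2)) - Real.log (Real.tan (a / 2)) := by
    apply intervalIntegral.integral_eq_sub_of_hasDerivAt
    · intro x hx
      rw [Set.uIcc_of_le hab.le] at hx
      exact aux_hasDerivAt x (hmem x hx)
    · exact hint
  rw [← hftc]
  have hba : (0:ℝ) < b - a := by linarith
  -- chord function
  set g : ℝ → ℝ := fun x => ((b - x) * (Real.sin a)⁻¹ + (x - a) * (Real.sin b)⁻¹) / (b - a) with hg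
  have hgint : IntervalIntegrable g MeasureTheory.volume a b := by
    apply Continuous.intervalIntegrable
    fun_prop
  have hmono : ∫ x in a..b, (Real.sin x)⁻¹ ≤ ∫ x in a..b, g x := by
    apply intervalIntegral.integral_mono_on hab.le hint hgint
    intro x hx
    have hxm := hmem x hx
    obtain ⟨t, s, htd, hsd⟩ : ∃ t s : ℝ, t = (b - x) / (b - a) ∧ s = (x - a) / (b - a) :=
      ⟨_, _, rfl, rfl⟩
    have ht : 0 ≤ t := htd ▸ div_nonneg (by linarith [hx.2]) hba.le
    have hs : 0 ≤ s := hsd ▸ div_nonneg (by linarith [hx.1]) hba.le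
    have hts : t + s = 1 := by rw [htd, hsd, ← add_div,
      show b - x + (x - a) = b - a by ring]; exact div_self hba.ne'
    have hxe : x = t * a + s * b := by rw [htd, hsd]; field_simp; ring
    have hsina : 0 < Real.sin a := aux_sin_pos ⟨ha, lt_of_le_of_lt hab.le hb⟩
    have hsinb : 0 < Real.sin b := aux_sin_pos ⟨lt_of_lt_of_le ha hab.le, hb⟩
    have hconc : t * Real.sin a + s * Real.sin b ≤ Real.sin x := by
      rw [hxe]
      have := (strictConcaveOn_sin_Icc.concaveOn).2
        (Set.mem_Icc.2 ⟨ha.le, by linarith⟩) (Set.mem_Icc.2 ⟨by linarith, hb.le⟩) ht hs hts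
      simpa [smul_eq_mul] using this
    have hpos : 0 < t * Real.sin a + s * Real.sin b := by
      rcases eq_or_lt_of_le ht with ht' | ht'
      · have hs1 : s = 1 := by linarith
        rw [← ht', hs1]; simpa using hsinb
      · nlinarith [mul_nonneg hs hsinb.le]
    calc (Real.sin x)⁻¹ ≤ (t * Real.sin a + s * Real.sin b)⁻¹ :=
          inv_anti₀ hpos hconc
      _ ≤ t * (Real.sin a)⁻¹ + s * (Real.sin b)⁻¹ := aux_inv_le hsina hsinb ht hs hts
      _ = g x := by rw [hg, htd, hsd]; ring
  refine hmono.trans ?_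
  have : ∫ x in a..b, g x = (b - a) * ((Real.sin a)⁻¹ + (Real.sin b)⁻¹) / 2 := by
    rw [hg]
    simp only [intervalIntegral.integral_div]
    rw [intervalIntegral.integral_add, intervalIntegral.integral_mul_const,
      intervalIntegral.integral_mul_const, intervalIntegral.integral_sub,
      intervalIntegral.integral_sub, intervalIntegral.integral_const, integral_id]
    · simp only [smul_eq_mul, intervalIntegral.integral_const]; field_simp; ring
    all_goals apply Continuous.intervalIntegrable; fun_prop
  rw [this]

theorem sum_inv_sin_ge (n : ℕ) (hn : 2 ≤ n) :
    ∑ k ∈ Finset.Icc 1 (n - 1), 1 / Real.sin (k * π / n) ≥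
      (2 * n / π) * Real.log (Real.cos (π / (2 * n)) / Real.sin (π / (2 * n))) := by
  have hπ := Real.pi_pos
  have hn0 : (0:ℝ) < n := by positivity
  have hn2 : (2:ℝ) ≤ n := by exact_mod_cast hn
  set θ : ℝ := π / n with hθd
  have hθ : 0 < θ := by positivity
  have hθπ : θ < π := by
    rw [hθd, div_lt_iff₀ hn0]; nlinarith
  -- for 1 ≤ k ≤ n-1, k*θ ∈ (0, π)
  have hmem : ∀ m : ℕ, 1 ≤ m → m ≤ n - 1 → (m : ℝ) * θ ∈ Set.Ioo 0 π := by
    intro m h1 h2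
    have hm1 : (1:ℝ) ≤ m := by exact_mod_cast h1
    have hm2 : (m : ℝ) ≤ n - 1 := by
      have : (m : ℝ) ≤ ((n - 1 : ℕ) : ℝ) := by exact_mod_cast h2
      rwa [Nat.cast_sub (by omega), Nat.cast_one] at this
    constructor
    · positivity
    · have : (m : ℝ) * θ ≤ (n - 1) * θ := by nlinarith
      have h2' : ((n:ℝ) - 1) * θ = π - θ := by
        rw [hθd]; field_simp
      rw [h2'] at this; linarith
  have key : ∀ m : ℕ, 1 ≤ m → m ≤ n - 1 →
      Real.log (Real.tan ((m * θ) / 2)) - Real.log (Real.tan (θ / 2)) ≤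
        θ * ((∑ k ∈ Finset.Icc 1 m, (Real.sin (k * θ))⁻¹)
          - ((Real.sin θ)⁻¹ + (Real.sin (m * θ))⁻¹) / 2) := by
    intro m hm
    induction m, hm using Nat.le_induction with
    | base => intro _; simp
    | succ m hm ih =>
      intro hm1
      have hmn : m ≤ n - 1 := by omega
      have ihm := ih hmn
      have hma := hmem m hm hmn
      have hmb := hmem (m + 1) (by omega) hm1
      push_cast at hmb
      have htrap := aux_trapezoid hma.1 (by push_cast; nlinarith) hmb.2
        (a := (m:ℝ) * θ) (b := ((m:ℝ)+1) * θ)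
      have hsum : ∑ k ∈ Finset.Icc 1 (m+1), (Real.sin (k * θ))⁻¹
          = (∑ k ∈ Finset.Icc 1 m, (Real.sin (k * θ))⁻¹) + (Real.sin (((m:ℝ)+1) * θ))⁻¹ := by
        rw [Finset.sum_Icc_succ_top (by omega), Nat.cast_add, Nat.cast_one]
      push_cast
      rw [hsum]
      have hdiff : ((m:ℝ)+1) * θ - (m:ℝ) * θ = θ := by ring
      rw [hdiff] at htrap
      push_cast at ihm
      linarith
  -- apply with m = n - 1
  have hkey := key (n - 1) (by omega) le_rfl
  have hcast : (((n - 1 : ℕ)) : ℝ) = (n : ℝ) - 1 := by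
    rw [Nat.cast_sub (by omega), Nat.cast_one]
  have hend : ((n:ℝ) - 1) * θ = π - θ := by rw [hθd]; field_simp
  have hsθ : 0 < Real.sin θ := Real.sin_pos_of_pos_of_lt_pi hθ hθπ
  have hsend : Real.sin (((n - 1 : ℕ)) * θ) = Real.sin θ := by
    rw [hcast, hend, Real.sin_pi_sub]
  -- LHS of key equals 2 * log (cos/sin)
  have hθ2 : θ / 2 = π / (2 * n) := by rw [hθd]; ring
  have htan : Real.tan (((n - 1 : ℕ) : ℝ) * θ / 2) = (Real.tan (θ / 2))⁻¹ := by
    rw [hcast, hend, show (π - θ) / 2 = π / 2 - θ / 2 by ring, Real.tan_pi_div_two_sub]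
  have hθ2mem : θ / 2 ∈ Set.Ioo 0 (π/2) := ⟨by positivity, by linarith⟩
  have hcosθ2 : 0 < Real.cos (θ/2) := Real.cos_pos_of_mem_Ioo ⟨by linarith, hθ2mem.2⟩
  have hsinθ2 : 0 < Real.sin (θ/2) := Real.sin_pos_of_pos_of_lt_pi hθ2mem.1 (by linarith)
  have htanθ2 : 0 < Real.tan (θ/2) := Real.tan_pos_of_pos_of_lt_pi_div_two hθ2mem.1 hθ2mem.2
  have hlog : Real.log (Real.tan (((n - 1 : ℕ) : ℝ) * θ / 2)) - Real.log (Real.tan (θ / 2))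
      = 2 * Real.log (Real.cos (π / (2*n)) / Real.sin (π / (2*n))) := by
    rw [htan, Real.log_inv]
    rw [show Real.cos (π / (2*n)) / Real.sin (π / (2*n)) = (Real.tan (θ/2))⁻¹ by
      rw [Real.tan_eq_sin_div_cos, hθ2]; rw [inv_div]]
    rw [Real.log_inv]; ring
  rw [hlog, hsend] at hkey
  -- sum positivity
  have hS : ∑ k ∈ Finset.Icc 1 (n - 1), 1 / Real.sin (k * π / n)
      = ∑ k ∈ Finset.Icc 1 (n - 1), (Real.sin (k * θ))⁻¹ := by
    apply Finset.sum_congr rfl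
    intro k _
    rw [one_div, hθd, mul_div_assoc]
  rw [ge_iff_le, hS]
  set S := ∑ k ∈ Finset.Icc 1 (n - 1), (Real.sin (k * θ))⁻¹ with hSd
  set L := Real.log (Real.cos (π / (2*n)) / Real.sin (π / (2*n))) with hLd
  have h1 : 2 * L ≤ θ * S := by
    have : 0 ≤ ((Real.sin θ)⁻¹ + (Real.sin θ)⁻¹) / 2 := by positivity
    nlinarith [hkey, mul_le_mul_of_nonneg_left this hθ.le]
  calc 2 * (n:ℝ) / π * L = ((n:ℝ)/π) * (2 * L) := by ring
    _ ≤ ((n:ℝ)/π) * (θ * S) := by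
        apply mul_le_mul_of_nonneg_left h1 (by positivity)
    _ = S := by rw [hθd]; field_simp
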